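/- Let m ≥ 2, N ≥ 1, G = GL(m, ℝ), H = {h ∈ G : h e₁ = e₁}. For sequences a⁰_s ∈ ℝ \ {0} and 𝐚_s = (a¹_s, …, a^{m−1}_s) ∈ ℝ^{m−1} (s ∈ ℤ/N), let A_s(a) be the m×m matrix whose first m−1 columns are e₂, …, e_m and whose last column is (a⁰_s, a¹_s, …, a^{m−1}_s)ᵀ, so that A_s(a)^{−1} is the block matrix with blocks (−𝐚_s (a⁰_s)^{−1}, I_{m−1}; (a⁰_s)^{−1}, 0). Let F : G^N → ℝ be differentiable, invariant under the right gauge action of H^N (F((h_{s+1} B_s h_s^{−1})_s) = F(B) for all h ∈ H^N), and suppose F((A_s(a)^{−1})_s) = f(a⁰, 𝐚) for a differentiable function f of the variables a^r_s. Then, with gradients ∇_s F, ∇'_s F ∈ gl(m, ℝ) defined by (d/dε)|₀ F(… e^{εξ}B_s …) = tr(∇_s F · ξ) and (d/dε)|₀ F(… B_s e^{εξ} …) = tr(∇'_s F · ξ), at the point B = (A_s(a)^{−1})_s one has for every s: (∇'_s F)_{1,1} = −a⁰_s ∂f/∂a⁰_s, (∇'_s F)_{1,i+1} = −a⁰_s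 ∂f/∂a^i_s for i = 1, …, m−1, (∇_s F)_{m,i} = −∂f/∂a^i_s for i = 1, …, m−1, and (∇_s F)_{m,m} = −a⁰_s ∂f/∂a⁰_s − Σ_{i=1}^{m−1} a^i_s ∂f/∂a^i_s. -/

import Mathlib

noncomputable section

/-- `m × m` real matrices, as plain functions (so that the product normed space
structure of `Fin m → Fin m → ℝ` is available). -/
abbrev Mat (m : ℕ) : Type := Fin m → Fin m → ℝ

/-- Matrix product. -/
def mmul {m : ℕ} (X Y : Mat m) : Mat m := fun i j => ∑ k, X i k * Y k j

/-- Matrix trace. -/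
def mtrace {m : ℕ} (X : Mat m) : ℝ := ∑ i, X i i

/-- Identity matrix. -/
def midm (m : ℕ) : Mat m := fun i j => if i = j then 1 else 0

/-- Matrix-vector product. -/
def mvec {m : ℕ} (X : Mat m) (v : Fin m → ℝ) : Fin m → ℝ := fun i => ∑ j, X i j * v j

/-- The first standard basis vector `e₁` of `ℝ^m`. -/
def e1vec (m : ℕ) : Fin m → ℝ := fun i => if (i : ℕ) = 0 then 1 else 0

/-- The companion-type matrix `A(a)` whose first `m−1` columns are `e₂, …, e_m` and whose
last column is `(a⁰, a¹, …, a^{m−1})ᵀ`. -/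
def Amat {m : ℕ} (a : Fin m → ℝ) : Mat m := fun i j =>
  if (j : ℕ) = m - 1 then a i else if (i : ℕ) = (j : ℕ) + 1 then 1 else 0

/-- The inverse `A(a)⁻¹`, given in block form by `(−𝐚 (a⁰)⁻¹, I_{m−1}; (a⁰)⁻¹, 0)`. -/
def AmatInv {m : ℕ} (a : Fin m → ℝ) : Mat m := fun i j =>
  if h : (i : ℕ) + 1 < m then
    (if (j : ℕ) = 0 then -a ⟨(i : ℕ) + 1, h⟩ / a ⟨0, by omega⟩
     else if (j : ℕ) = (i : ℕ) + 1 then 1 else 0)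
  else (if (j : ℕ) = 0 then (a ⟨0, i.pos⟩)⁻¹ else 0)


namespace Stmt13
open ContinuousLinearMap
variable {m N : ℕ}

/-- The elementary matrix `E_{pq}`. -/
def Eij {m : ℕ} (p q : Fin m) : Mat m := fun i j => if i = p ∧ j = q then 1 else 0

lemma trace_mul_Eij {m : ℕ} (X : Mat m) (p q : Fin m) :
    mtrace (mmul X (Eij p q)) = X q p := by
  unfold mtrace mmul Eij
  simp [ite_and, mul_ite, Finset.sum_ite_eq']

lemma mmul_Eij_right {m : ℕ} (X : Mat m) (p q i j : Fin m) :
    mmul X (Eij p q) i j = if j = q then X i p else 0 := by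
  unfold mmul Eij
  simp [ite_and, mul_ite, Finset.sum_ite_eq']

lemma mmul_Eij_left {m : ℕ} (X : Mat m) (p q i j : Fin m) :
    mmul (Eij p q) X i j = if i = p then X q j else 0 := by
  unfold mmul Eij
  simp [ite_and, ite_mul, Finset.sum_ite_eq']

lemma AmatInv_last [NeZero m] (a : Fin m → ℝ) (i j : Fin m) (hi : ¬ ((i : ℕ) + 1 < m)) :
    AmatInv a i j = if (j : ℕ) = 0 then (a 0)⁻¹ else 0 := by
  unfold AmatInv; rw [dif_neg hi]; rfl

lemma AmatInv_mid [NeZero m] (a : Fin m → ℝ) (i j : Fin m) (hi : (i : ℕ) + 1 < m) :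
    AmatInv a i j = if (j : ℕ) = 0 then -a ⟨(i : ℕ) + 1, hi⟩ / a 0
      else if (j : ℕ) = (i : ℕ) + 1 then 1 else 0 := by
  unfold AmatInv; rw [dif_pos hi]; rfl

lemma AmatInv_comp_mid [NeZero m] [NeZero N] (a : (Fin m × ZMod N) → ℝ) (s : ZMod N)
    (i j : Fin m) (hi : (i : ℕ) + 1 < m) :
    AmatInv (fun r => a (r, s)) i j = if (j : ℕ) = 0 then -a (⟨(i : ℕ) + 1, hi⟩, s) / a (0, s)
      else if (j : ℕ) = (i : ℕ) + 1 then 1 else 0 := AmatInv_mid _ i j hi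

lemma AmatInv_comp_last [NeZero m] [NeZero N] (a : (Fin m × ZMod N) → ℝ) (s : ZMod N)
    (i j : Fin m) (hi : ¬ ((i : ℕ) + 1 < m)) :
    AmatInv (fun r => a (r, s)) i j = if (j : ℕ) = 0 then (a (0, s))⁻¹ else 0 :=
  AmatInv_last _ i j hi

lemma Amat_zero [NeZero m] (a : Fin m → ℝ) (j : Fin m) :
    Amat a 0 j = if (j : ℕ) = m - 1 then a 0 else 0 := by
  unfold Amat
  by_cases hj : (j : ℕ) = m - 1
  · rw [if_pos hj, if_pos hj]
  · rw [if_neg hj, if_neg hj, if_neg (by simp [Fin.val_zero])]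

lemma mul_A_AInv [NeZero m] (a : Fin m → ℝ) (h0 : a 0 ≠ 0) :
    mmul (Amat a) (AmatInv a) = midm m := by
  have hm : 0 < m := Nat.pos_of_ne_zero (NeZero.ne m)
  funext i j
  show (∑ k, Amat a i k * AmatInv a k j) = midm m i j
  have key : ∀ k : Fin m, Amat a i k * AmatInv a k j =
      (if k = (⟨m - 1, by omega⟩ : Fin m) then a i * AmatInv a k j else 0) +
      (if (i : ℕ) = (k : ℕ) + 1 then AmatInv a k j else 0) := by
    intro k
    unfold Amat
    by_cases hk : (k : ℕ) = m - 1
    · rw [if_pos hk, if_pos (Fin.ext hk), if_neg (by omega : ¬ (i : ℕ) = (k : ℕ) + 1)]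
      ring
    · rw [if_neg hk, if_neg (fun h : k = ⟨m - 1, by omega⟩ => hk (congrArg Fin.val h))]
      split_ifs <;> ring
  rw [Finset.sum_congr rfl (fun k _ => key k), Finset.sum_add_distrib]
  rw [Finset.sum_ite_eq' Finset.univ (⟨m - 1, by omega⟩ : Fin m) (fun k => a i * AmatInv a k j)]
  rw [if_pos (Finset.mem_univ _)]
  rw [AmatInv_last a _ j (by simp; omega)]
  by_cases hi : (i : ℕ) = 0
  · rw [Finset.sum_eq_zero (fun k _ => by rw [if_neg (by omega)])]
    have hi0 : i = 0 := Fin.ext (by simpa using hi)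
    subst hi0
    by_cases hj : (j : ℕ) = 0
    · have hj0 : j = 0 := Fin.ext (by simpa using hj)
      subst hj0
      simp [midm, mul_inv_cancel₀ h0]
    · have : ¬ ((0 : Fin m) = j) := fun h => hj (by simp [← h])
      simp [midm, hj, this]
  · set piv : Fin m := ⟨(i : ℕ) - 1, by omega⟩ with hpivdef
    have hpv : (piv : ℕ) = (i : ℕ) - 1 := rfl
    have hpiv : (piv : ℕ) + 1 < m := by rw [hpv]; have := i.isLt; omega
    rw [Finset.sum_eq_single piv
      (fun k _ hk => by
        rw [if_neg (fun h : (i : ℕ) = (k : ℕ) + 1 => hk (Fin.ext (by rw [hpv]; omega)))])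
      (fun h => absurd (Finset.mem_univ _) h)]
    have hcond : (i : ℕ) = (piv : ℕ) + 1 := by rw [hpv]; omega
    rw [if_pos hcond]
    rw [AmatInv_mid a piv j hpiv]
    have hval : a ⟨(piv : ℕ) + 1, hpiv⟩ = a i := congrArg a (Fin.ext (by simp [hpv]; omega))
    rw [hval]
    by_cases hj : (j : ℕ) = 0
    · rw [if_pos hj, if_pos hj]
      have hne : ¬ (i = j) := fun h => hi (h ▸ hj)
      simp only [midm, if_neg hne]
      field_simp
      ring
    · rw [if_neg hj, if_neg hj]
      have hiff : ((j : ℕ) = (piv : ℕ) + 1) ↔ (i = j) := by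
        rw [Fin.ext_iff, hpv]; omega
      simp only [midm, mul_zero, zero_add]
      by_cases h1 : (j : ℕ) = (piv : ℕ) + 1
      · rw [if_pos h1, if_pos (hiff.1 h1)]
      · rw [if_neg h1, if_neg (fun h => h1 (hiff.2 h))]

lemma mul_AInv_A [NeZero m] (hm2 : 2 ≤ m) (a : Fin m → ℝ) (h0 : a 0 ≠ 0) :
    mmul (AmatInv a) (Amat a) = midm m := by
  funext i j
  show (∑ k, AmatInv a i k * Amat a k j) = midm m i j
  by_cases h : (i : ℕ) + 1 < m
  · have key : ∀ k : Fin m, AmatInv a i k * Amat a k j =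
        (if k = (0 : Fin m) then (-a ⟨(i : ℕ) + 1, h⟩ / a 0) * Amat a k j else 0) +
        (if k = (⟨(i : ℕ) + 1, h⟩ : Fin m) then Amat a k j else 0) := by
      intro k
      rw [AmatInv_mid a i k h]
      by_cases hk0 : (k : ℕ) = 0
      · have : k = 0 := Fin.ext (by simpa using hk0)
        subst this
        rw [if_pos rfl, if_pos hk0, if_neg (Fin.ne_of_val_ne (by simp)), add_zero]
      · have hkne : ¬ (k = 0) := fun hh => hk0 (by simp [hh])
        rw [if_neg hk0, if_neg hkne]
        by_cases hk1 : (k : ℕ) = (i : ℕ) + 1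
        · rw [if_pos hk1, if_pos (Fin.ext (by simpa using hk1)), one_mul, zero_add]
        · rw [if_neg hk1, if_neg (fun hh : k = ⟨(i:ℕ)+1, h⟩ => hk1 (congrArg Fin.val hh)),
            zero_mul, add_zero]
    rw [Finset.sum_congr rfl (fun k _ => key k), Finset.sum_add_distrib,
      Finset.sum_ite_eq' Finset.univ (0 : Fin m)
        (fun k => (-a ⟨(i : ℕ) + 1, h⟩ / a 0) * Amat a k j),
      Finset.sum_ite_eq' Finset.univ (⟨(i : ℕ) + 1, h⟩ : Fin m) (fun k => Amat a k j),
      if_pos (Finset.mem_univ _), if_pos (Finset.mem_univ _)]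
    rw [Amat_zero a j]
    have hAm : Amat a ⟨(i : ℕ) + 1, h⟩ j =
        if (j : ℕ) = m - 1 then a ⟨(i : ℕ) + 1, h⟩
        else if (i : ℕ) + 1 = (j : ℕ) + 1 then 1 else 0 := rfl
    rw [hAm]
    by_cases hj : (j : ℕ) = m - 1
    · rw [if_pos hj, if_pos hj]
      have hne : ¬ (i = j) := by rw [Fin.ext_iff]; omega
      simp only [midm, if_neg hne]
      field_simp
      ring
    · rw [if_neg hj, if_neg hj, mul_zero, zero_add]
      have hiff : ((i : ℕ) + 1 = (j : ℕ) + 1) ↔ (i = j) := by rw [Fin.ext_iff]; omega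
      simp only [midm]
      by_cases h1 : (i : ℕ) + 1 = (j : ℕ) + 1
      · rw [if_pos h1, if_pos (hiff.1 h1)]
      · rw [if_neg h1, if_neg (fun hh => h1 (hiff.2 hh))]
  · have key : ∀ k : Fin m, AmatInv a i k * Amat a k j =
        (if k = (0 : Fin m) then (a 0)⁻¹ * Amat a k j else 0) := by
      intro k
      rw [AmatInv_last a i k h]
      by_cases hk0 : (k : ℕ) = 0
      · have : k = 0 := Fin.ext (by simpa using hk0)
        subst this
        rw [if_pos hk0, if_pos rfl]
      · have hkne : ¬ (k = 0) := fun hh => hk0 (by simp [hh])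
        rw [if_neg hk0, if_neg hkne, zero_mul]
    rw [Finset.sum_congr rfl (fun k _ => key k),
      Finset.sum_ite_eq' Finset.univ (0 : Fin m) (fun k => (a 0)⁻¹ * Amat a k j),
      if_pos (Finset.mem_univ _), Amat_zero a j]
    have hi : (i : ℕ) = m - 1 := by have := i.isLt; omega
    by_cases hj : (j : ℕ) = m - 1
    · rw [if_pos hj]
      have : i = j := Fin.ext (by omega)
      simp [midm, this, inv_mul_cancel₀ h0]
    · rw [if_neg hj, mul_zero]
      have : ¬ (i = j) := by rw [Fin.ext_iff]; omega
      simp [midm, this]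

/-- Coordinate projection as a continuous linear map. -/
def prj [NeZero m] [NeZero N] (p : Fin m × ZMod N) : ((Fin m × ZMod N) → ℝ) →L[ℝ] ℝ := proj p

lemma prj_apply [NeZero m] [NeZero N] (p : Fin m × ZMod N) (δ : (Fin m × ZMod N) → ℝ) :
    prj p δ = δ p := rfl

lemma hasFDerivAt_prj [NeZero m] [NeZero N] (p : Fin m × ZMod N) (a : (Fin m × ZMod N) → ℝ) :
    HasFDerivAt (fun b : (Fin m × ZMod N) → ℝ => b p) (prj p) a :=
  (prj p).hasFDerivAt

/-- The derivative of the `(s,i,j)` entry of `b ↦ AmatInv (b (·, s))`. -/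
def Dent [NeZero m] [NeZero N] (a : (Fin m × ZMod N) → ℝ) (s : ZMod N) (i j : Fin m) :
    ((Fin m × ZMod N) → ℝ) →L[ℝ] ℝ :=
  if h : (i : ℕ) + 1 < m then
    if (j : ℕ) = 0 then
      (a (⟨(i : ℕ) + 1, h⟩, s) / a (0, s) ^ 2) • prj (0, s)
        - (a (0, s))⁻¹ • prj (⟨(i : ℕ) + 1, h⟩, s)
    else 0
  else
    if (j : ℕ) = 0 then (-(a (0, s) ^ 2)⁻¹) • prj (0, s) else 0

lemma Dent_apply [NeZero m] [NeZero N] (a δ : (Fin m × ZMod N) → ℝ) (s : ZMod N) (i j : Fin m) :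
    Dent a s i j δ =
      if h : (i : ℕ) + 1 < m then
        if (j : ℕ) = 0 then
          a (⟨(i : ℕ) + 1, h⟩, s) / a (0, s) ^ 2 * δ (0, s)
            - (a (0, s))⁻¹ * δ (⟨(i : ℕ) + 1, h⟩, s)
        else 0
      else
        if (j : ℕ) = 0 then -(a (0, s) ^ 2)⁻¹ * δ (0, s) else 0 := by
  unfold Dent
  split_ifs <;> simp [smul_eq_mul, prj_apply]

lemma hasFDerivAt_entry [NeZero m] [NeZero N] (a : (Fin m × ZMod N) → ℝ) (s : ZMod N)
    (hs : a (0, s) ≠ 0) (i j : Fin m) :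
    HasFDerivAt (fun b : (Fin m × ZMod N) → ℝ => AmatInv (fun r => b (r, s)) i j)
      (Dent a s i j) a := by
  unfold AmatInv Dent
  by_cases h : (i : ℕ) + 1 < m
  · simp only [dif_pos h]
    by_cases hj : (j : ℕ) = 0
    · simp only [if_pos hj, div_eq_mul_inv]
      have hq : HasFDerivAt (fun b : (Fin m × ZMod N) → ℝ => b ((0 : Fin m), s))
          (prj ((0 : Fin m), s)) a := hasFDerivAt_prj _ a
      have hp : HasFDerivAt (fun b : (Fin m × ZMod N) → ℝ => b ((⟨(i : ℕ) + 1, h⟩ : Fin m), s))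
          (prj ((⟨(i : ℕ) + 1, h⟩ : Fin m), s)) a := hasFDerivAt_prj _ a
      have hinv : HasFDerivAt (fun b : (Fin m × ZMod N) → ℝ => (b ((0 : Fin m), s))⁻¹)
          ((smulRight (1 : ℝ →L[ℝ] ℝ) (-(a ((0 : Fin m), s) ^ 2)⁻¹)).comp (prj ((0 : Fin m), s)))
          a := (hasFDerivAt_inv hs).comp a hq
      have hmul := (hp.neg).mul hinv
      have hD : (-a ((⟨(i : ℕ) + 1, h⟩ : Fin m), s)) •
            ((smulRight (1 : ℝ →L[ℝ] ℝ) (-(a ((0 : Fin m), s) ^ 2)⁻¹)).comp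
              (prj ((0 : Fin m), s)))
            + (a ((0 : Fin m), s))⁻¹ • (-(prj ((⟨(i : ℕ) + 1, h⟩ : Fin m), s)))
          = (a (⟨(i : ℕ) + 1, h⟩, s) * (a (0, s) ^ 2)⁻¹) • prj ((0 : Fin m), s)
            - (a (0, s))⁻¹ • prj ((⟨(i : ℕ) + 1, h⟩ : Fin m), s) := by
        ext δ
        simp [smul_eq_mul, prj_apply]
        ring
      rw [← hD]
      exact hmul
    · simp only [if_neg hj]
      exact hasFDerivAt_const _ _
  · simp only [dif_neg h]
    by_cases hj : (j : ℕ) = 0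
    · simp only [if_pos hj]
      have hq : HasFDerivAt (fun b : (Fin m × ZMod N) → ℝ => b ((0 : Fin m), s))
          (prj ((0 : Fin m), s)) a := hasFDerivAt_prj _ a
      have hinv := (hasFDerivAt_inv hs).comp a hq
      have hD : (smulRight (1 : ℝ →L[ℝ] ℝ) (-(a ((0 : Fin m), s) ^ 2)⁻¹)).comp
            (prj ((0 : Fin m), s))
          = (-(a (0, s) ^ 2)⁻¹) • prj ((0 : Fin m), s) := by
        ext δ
        simp [smul_eq_mul, prj_apply]
        ring
      rw [← hD]
      exact hinv
    · simp only [if_neg hj]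
      exact hasFDerivAt_const _ _

/-- The derivative of `b ↦ fun s => AmatInv (b (·, s))`. -/
def Dmat [NeZero m] [NeZero N] (a : (Fin m × ZMod N) → ℝ) :
    ((Fin m × ZMod N) → ℝ) →L[ℝ] (ZMod N → Mat m) :=
  ContinuousLinearMap.pi fun s => ContinuousLinearMap.pi fun i =>
    ContinuousLinearMap.pi fun j => Dent a s i j

lemma Dmat_apply [NeZero m] [NeZero N] (a δ : (Fin m × ZMod N) → ℝ) (t : ZMod N) (i j : Fin m) :
    Dmat a δ t i j = Dent a t i j δ := rfl

lemma hasFDerivAt_Phi [NeZero m] [NeZero N] (a : (Fin m × ZMod N) → ℝ)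
    (ha : ∀ s, a (0, s) ≠ 0) :
    HasFDerivAt (fun (b : (Fin m × ZMod N) → ℝ) (s : ZMod N) => AmatInv (fun r => b (r, s)))
      (Dmat a) a := by
  apply hasFDerivAt_pi.2
  intro s
  apply hasFDerivAt_pi.2
  intro i
  apply hasFDerivAt_pi.2
  intro j
  exact hasFDerivAt_entry a s (ha s) i j

/-- The tangent direction corresponding to the variation `w` of the `s`-th invariants. -/
def deltaw (m N : ℕ) (s : ZMod N) (w : Fin m → ℝ) : (Fin m × ZMod N) → ℝ :=
  fun p => if p.2 = s then w p.1 else 0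

lemma Dmat_deltaw [NeZero m] [NeZero N] (a : (Fin m × ZMod N) → ℝ) (s : ZMod N)
    (w : Fin m → ℝ) (t : ZMod N) (i j : Fin m) :
    Dmat a (deltaw m N s w) t i j =
      if t = s then
        (if h : (i : ℕ) + 1 < m then
          if (j : ℕ) = 0 then
            a (⟨(i : ℕ) + 1, h⟩, s) / a (0, s) ^ 2 * w 0 - (a (0, s))⁻¹ * w ⟨(i : ℕ) + 1, h⟩
          else 0
        else if (j : ℕ) = 0 then -(a (0, s) ^ 2)⁻¹ * w 0 else 0)
      else 0 := by
  unfold deltaw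
  rw [Dmat_apply, Dent_apply]
  rcases eq_or_ne t s with rfl | hts
  · rw [if_pos rfl]
    simp
  · rw [if_neg hts]
    split_ifs <;> simp [hts]

lemma direction_eq [NeZero m] [NeZero N] (a : (Fin m × ZMod N) → ℝ) (s : ZMod N)
    (w : Fin m → ℝ) (M : Mat m)
    (hM : ∀ i j, M i j =
      (if h : (i : ℕ) + 1 < m then
        if (j : ℕ) = 0 then
          a (⟨(i : ℕ) + 1, h⟩, s) / a (0, s) ^ 2 * w 0 - (a (0, s))⁻¹ * w ⟨(i : ℕ) + 1, h⟩
        else 0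
      else if (j : ℕ) = 0 then -(a (0, s) ^ 2)⁻¹ * w 0 else 0)) :
    Pi.single s M = Dmat a (deltaw m N s w) := by
  funext t i j
  rw [Dmat_deltaw]
  rcases eq_or_ne t s with rfl | h
  · rw [Pi.single_eq_same, if_pos rfl, hM]
  · rw [Pi.single_eq_of_ne h, if_neg h]
    rfl

lemma deltaw_eq_sum [NeZero m] [NeZero N] (s : ZMod N) (w : Fin m → ℝ) :
    deltaw m N s w
      = ∑ r : Fin m, w r • (Pi.single (r, s) (1 : ℝ) : (Fin m × ZMod N) → ℝ) := by
  funext p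
  show (if p.2 = s then w p.1 else 0) = _
  rw [Finset.sum_apply]
  rcases p with ⟨q, t⟩
  simp only [Pi.smul_apply, Pi.single_apply, smul_eq_mul, mul_ite, mul_one, mul_zero,
    Prod.mk.injEq]
  rcases eq_or_ne t s with rfl | h
  · rw [if_pos rfl]
    rw [Finset.sum_eq_single q (fun r _ hr => by rw [if_neg (by tauto)])
      (fun hq => absurd (Finset.mem_univ _) hq)]
    rw [if_pos ⟨rfl, rfl⟩]
  · rw [if_neg h]
    exact (Finset.sum_eq_zero (fun r _ => by rw [if_neg (by tauto)])).symm

lemma fderiv_deltaw [NeZero m] [NeZero N] (f : ((Fin m × ZMod N) → ℝ) → ℝ)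
    (a : (Fin m × ZMod N) → ℝ) (s : ZMod N) (w : Fin m → ℝ) :
    fderiv ℝ f a (deltaw m N s w)
      = ∑ r : Fin m, w r * fderiv ℝ f a (Pi.single (r, s) 1) := by
  rw [deltaw_eq_sum, map_sum]
  simp [smul_eq_mul]

end Stmt13

/-- The gradients of a gauge-invariant extension `F` of a function
`f` of the invariants `a^r_s`, computed at the point `B = (A_s(a)^{−1})_s`. -/
theorem stmt13 (m N : ℕ) [NeZero m] [NeZero N] (hm : 2 ≤ m)
    (F : (ZMod N → Mat m) → ℝ) (hF : Differentiable ℝ F)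
    (hinv : ∀ h hi : ZMod N → Mat m,
      (∀ s, mmul (h s) (hi s) = midm m ∧ mmul (hi s) (h s) = midm m) →
      (∀ s, mvec (h s) (e1vec m) = e1vec m) →
      ∀ B : ZMod N → Mat m, F (fun s => mmul (h (s + 1)) (mmul (B s) (hi s))) = F B)
    (f : ((Fin m × ZMod N) → ℝ) → ℝ) (hf : Differentiable ℝ f)
    (hFf : ∀ a : Fin m × ZMod N → ℝ, (∀ s, a (0, s) ≠ 0) →
      F (fun s => AmatInv (fun r => a (r, s))) = f a)
    (a : Fin m × ZMod N → ℝ) (ha : ∀ s, a (0, s) ≠ 0)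
    (gradL gradR : ZMod N → Mat m)
    (hgradL : ∀ (s : ZMod N) (ξ : Mat m),
      fderiv ℝ F (fun t => AmatInv (fun r => a (r, t)))
          (Pi.single s (mmul ξ (AmatInv (fun r => a (r, s)))))
        = mtrace (mmul (gradL s) ξ))
    (hgradR : ∀ (s : ZMod N) (ξ : Mat m),
      fderiv ℝ F (fun t => AmatInv (fun r => a (r, t)))
          (Pi.single s (mmul (AmatInv (fun r => a (r, s))) ξ))
        = mtrace (mmul (gradR s) ξ)) :
    -- `A(a)⁻¹` really is the inverse of the companion matrix `A(a)`:
    (∀ s : ZMod N, mmul (Amat (fun r => a (r, s))) (AmatInv (fun r => a (r, s))) = midm m ∧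
        mmul (AmatInv (fun r => a (r, s))) (Amat (fun r => a (r, s))) = midm m) ∧
    -- `(∇'_s F)_{1,1} = −a⁰_s ∂f/∂a⁰_s`:
    (∀ s : ZMod N, gradR s 0 0 = -(a (0, s)) * fderiv ℝ f a (Pi.single (0, s) 1)) ∧
    -- `(∇'_s F)_{1,i+1} = −a⁰_s ∂f/∂a^i_s` for `i = 1, …, m−1`:
    (∀ (s : ZMod N) (i : Fin m), i ≠ 0 →
      gradR s 0 i = -(a (0, s)) * fderiv ℝ f a (Pi.single (i, s) 1)) ∧
    -- `(∇_s F)_{m,i} = −∂f/∂a^i_s` for `i = 1, …, m−1`: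
    (∀ (s : ZMod N) (i : ℕ) (h1 : 1 ≤ i) (h2 : i ≤ m - 1),
      gradL s ⟨m - 1, by omega⟩ ⟨i - 1, by omega⟩
        = -fderiv ℝ f a (Pi.single ((⟨i, by omega⟩ : Fin m), s) 1)) ∧
    -- `(∇_s F)_{m,m} = −a⁰_s ∂f/∂a⁰_s − Σ_{i=1}^{m−1} a^i_s ∂f/∂a^i_s`:
    (∀ s : ZMod N, gradL s ⟨m - 1, by omega⟩ ⟨m - 1, by omega⟩
        = -(a (0, s)) * fderiv ℝ f a (Pi.single (0, s) 1)
          - ∑ i ∈ Finset.univ.erase (0 : Fin m), a (i, s) * fderiv ℝ f a (Pi.single (i, s) 1)) := by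
  classical
  have hm0 : 0 < m := by omega
  -- derivative setup
  have hPhi := Stmt13.hasFDerivAt_Phi a ha
  have hU : IsOpen {b : (Fin m × ZMod N) → ℝ | ∀ s, b (0, s) ≠ 0} := by
    have he : {b : (Fin m × ZMod N) → ℝ | ∀ s, b (0, s) ≠ 0}
        = ⋂ s, {b : (Fin m × ZMod N) → ℝ | b (0, s) ≠ 0} := by
      ext b; simp
    rw [he]
    exact isOpen_iInter_of_finite fun s =>
      isOpen_ne.preimage (continuous_apply ((0 : Fin m), s))
  have hev : f =ᶠ[nhds a]
      (F ∘ fun (b : (Fin m × ZMod N) → ℝ) (s : ZMod N) => AmatInv fun r => b (r, s)) := by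
    filter_upwards [hU.mem_nhds ha] with b hb
    exact (hFf b hb).symm
  have hFa : HasFDerivAt F (fderiv ℝ F (fun t => AmatInv fun r => a (r, t)))
      (fun t => AmatInv fun r => a (r, t)) := (hF _).hasFDerivAt
  have hc : HasFDerivAt
      (F ∘ fun (b : (Fin m × ZMod N) → ℝ) (s : ZMod N) => AmatInv fun r => b (r, s))
      ((fderiv ℝ F (fun t => AmatInv fun r => a (r, t))).comp (Stmt13.Dmat a)) a :=
    hFa.comp a hPhi
  have hfd : HasFDerivAt f
      ((fderiv ℝ F (fun t => AmatInv fun r => a (r, t))).comp (Stmt13.Dmat a)) a :=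
    hc.congr_of_eventuallyEq hev
  have hkey : ∀ δ, fderiv ℝ f a δ
      = fderiv ℝ F (fun t => AmatInv fun r => a (r, t)) (Stmt13.Dmat a δ) := by
    intro δ
    rw [hfd.fderiv]
    rfl
  refine ⟨fun s => ⟨Stmt13.mul_A_AInv _ (ha s), Stmt13.mul_AInv_A hm _ (ha s)⟩, ?_, ?_, ?_, ?_⟩
  · -- (∇'_s F)_{1,1}
    intro s
    have harg : Pi.single s (mmul (AmatInv fun r => a (r, s)) (Stmt13.Eij 0 0))
        = Stmt13.Dmat a (Stmt13.deltaw m N s (fun r => if r = 0 then -(a (0, s)) else 0)) := by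
      apply Stmt13.direction_eq a s (fun r => if r = 0 then -(a (0, s)) else 0)
      intro i j
      rw [Stmt13.mmul_Eij_right]
      by_cases h : (i : ℕ) + 1 < m
      · rw [dif_pos h]
        by_cases hj : (j : ℕ) = 0
        · rw [if_pos (show j = 0 from Fin.ext (by simpa using hj)), if_pos hj,
            Stmt13.AmatInv_comp_mid a s i 0 h,
            if_pos (show ((0 : Fin m) : ℕ) = 0 by simp),
            if_pos (show (0 : Fin m) = 0 from rfl),
            if_neg (show ¬ (⟨(i : ℕ) + 1, h⟩ : Fin m) = 0 from Fin.ne_of_val_ne (by simp))]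
          have h0 := ha s
          field_simp
          ring
        · rw [if_neg (show ¬ j = 0 from fun hh => hj (by simp [hh])), if_neg hj]
      · rw [dif_neg h]
        by_cases hj : (j : ℕ) = 0
        · rw [if_pos (show j = 0 from Fin.ext (by simpa using hj)), if_pos hj,
            Stmt13.AmatInv_comp_last a s i 0 h,
            if_pos (show ((0 : Fin m) : ℕ) = 0 by simp),
            if_pos (show (0 : Fin m) = 0 from rfl)]
          have h0 := ha s
          field_simp
        · rw [if_neg (show ¬ j = 0 from fun hh => hj (by simp [hh])), if_neg hj]
    have h1 := hgradR s (Stmt13.Eij 0 0)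
    rw [Stmt13.trace_mul_Eij, harg, ← hkey, Stmt13.fderiv_deltaw] at h1
    rw [← h1]
    rw [Finset.sum_eq_single (0 : Fin m) (fun r _ hr => by rw [if_neg hr, zero_mul])
      (fun hq => absurd (Finset.mem_univ _) hq)]
    rw [if_pos rfl]
  · -- (∇'_s F)_{1,i+1}
    intro s i hi
    have hiv : ¬ ((i : ℕ) = 0) := fun hh => hi (Fin.ext (by simpa using hh))
    have harg : Pi.single s (mmul (AmatInv fun r => a (r, s)) (Stmt13.Eij i 0))
        = Stmt13.Dmat a (Stmt13.deltaw m N s (fun r => if r = i then -(a (0, s)) else 0)) := by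
      apply Stmt13.direction_eq a s (fun r => if r = i then -(a (0, s)) else 0)
      intro i' j
      rw [Stmt13.mmul_Eij_right]
      by_cases h : (i' : ℕ) + 1 < m
      · rw [dif_pos h]
        by_cases hj : (j : ℕ) = 0
        · rw [if_pos (show j = 0 from Fin.ext (by simpa using hj)), if_pos hj,
            Stmt13.AmatInv_comp_mid a s i' i h,
            if_neg (show ¬ ((i : Fin m) : ℕ) = 0 from hiv),
            if_neg (show ¬ (0 : Fin m) = i from fun hh => hiv (by simp [← hh]))]
          by_cases hc1 : (i : ℕ) = (i' : ℕ) + 1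
          · rw [if_pos hc1, if_pos (show (⟨(i' : ℕ) + 1, h⟩ : Fin m) = i from
              Fin.ext (by simpa using hc1.symm))]
            have := ha s
            field_simp
            ring
          · rw [if_neg hc1, if_neg (show ¬ (⟨(i' : ℕ) + 1, h⟩ : Fin m) = i from
              fun hh => hc1 (by rw [← hh])), mul_zero, mul_zero, sub_zero]
        · rw [if_neg (show ¬ j = 0 from fun hh => hj (by simp [hh])), if_neg hj]
      · rw [dif_neg h]
        by_cases hj : (j : ℕ) = 0
        · rw [if_pos (show j = 0 from Fin.ext (by simpa using hj)), if_pos hj,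
            Stmt13.AmatInv_comp_last a s i' i h,
            if_neg (show ¬ ((i : Fin m) : ℕ) = 0 from hiv),
            if_neg (show ¬ (0 : Fin m) = i from fun hh => hiv (by simp [← hh])),
            mul_zero]
        · rw [if_neg (show ¬ j = 0 from fun hh => hj (by simp [hh])), if_neg hj]
    have h1 := hgradR s (Stmt13.Eij i 0)
    rw [Stmt13.trace_mul_Eij, harg, ← hkey, Stmt13.fderiv_deltaw] at h1
    rw [← h1]
    rw [Finset.sum_eq_single i (fun r _ hr => by rw [if_neg hr, zero_mul])
      (fun hq => absurd (Finset.mem_univ _) hq)]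
    rw [if_pos rfl]
  · -- (∇_s F)_{m,i}
    intro s i h1i h2i
    have harg : Pi.single s
          (mmul (Stmt13.Eij (⟨i - 1, by omega⟩ : Fin m) (⟨m - 1, by omega⟩ : Fin m))
            (AmatInv fun r => a (r, s)))
        = Stmt13.Dmat a
            (Stmt13.deltaw m N s (fun r => if r = (⟨i, by omega⟩ : Fin m) then -1 else 0)) := by
      apply Stmt13.direction_eq a s (fun r => if r = (⟨i, by omega⟩ : Fin m) then -1 else 0)
      intro i' j
      rw [Stmt13.mmul_Eij_left,
        Stmt13.AmatInv_comp_last a s (⟨m - 1, by omega⟩ : Fin m) j (by simp; omega)]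
      by_cases h : (i' : ℕ) + 1 < m
      · rw [dif_pos h,
          if_neg (show ¬ (0 : Fin m) = (⟨i, by omega⟩ : Fin m) by simp [Fin.ext_iff]; omega)]
        by_cases hj : (j : ℕ) = 0
        · rw [if_pos hj, if_pos hj]
          by_cases hc1 : i' = (⟨i - 1, by omega⟩ : Fin m)
          · rw [if_pos hc1,
              if_pos (show (⟨(i' : ℕ) + 1, h⟩ : Fin m) = (⟨i, by omega⟩ : Fin m) from
                Fin.ext (by simp [Fin.ext_iff] at hc1; simp [hc1]; omega))]
            ring
          · rw [if_neg hc1,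
              if_neg (show ¬ (⟨(i' : ℕ) + 1, h⟩ : Fin m) = (⟨i, by omega⟩ : Fin m) from
                fun hh => hc1 (Fin.ext (by simp [Fin.ext_iff] at hh ⊢; omega)))]
            ring
        · rw [if_neg hj, if_neg hj, ite_self]
      · rw [dif_neg h,
          if_neg (show ¬ (0 : Fin m) = (⟨i, by omega⟩ : Fin m) by simp [Fin.ext_iff]; omega),
          mul_zero,
          if_neg (show ¬ i' = (⟨i - 1, by omega⟩ : Fin m) from
            fun hh => by have := i'.isLt; simp [Fin.ext_iff] at hh; omega)]
        rw [ite_self]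
    have h1 := hgradL s (Stmt13.Eij (⟨i - 1, by omega⟩ : Fin m) (⟨m - 1, by omega⟩ : Fin m))
    rw [Stmt13.trace_mul_Eij, harg, ← hkey, Stmt13.fderiv_deltaw] at h1
    rw [← h1]
    rw [Finset.sum_eq_single (⟨i, by omega⟩ : Fin m)
      (fun r _ hr => by rw [if_neg hr, zero_mul])
      (fun hq => absurd (Finset.mem_univ _) hq)]
    rw [if_pos rfl]
    ring
  · -- (∇_s F)_{m,m}
    intro s
    have harg : Pi.single s
          (mmul (Stmt13.Eij (⟨m - 1, by omega⟩ : Fin m) (⟨m - 1, by omega⟩ : Fin m))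
            (AmatInv fun r => a (r, s)))
        = Stmt13.Dmat a (Stmt13.deltaw m N s (fun r => -(a (r, s)))) := by
      apply Stmt13.direction_eq a s (fun r => -(a (r, s)))
      intro i' j
      rw [Stmt13.mmul_Eij_left,
        Stmt13.AmatInv_comp_last a s (⟨m - 1, by omega⟩ : Fin m) j (by simp; omega)]
      by_cases h : (i' : ℕ) + 1 < m
      · rw [dif_pos h,
          if_neg (show ¬ i' = (⟨m - 1, by omega⟩ : Fin m) from
            fun hh => by simp [Fin.ext_iff] at hh; omega)]
        by_cases hj : (j : ℕ) = 0
        · rw [if_pos hj]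
          have h0 := ha s
          field_simp
          ring
        · rw [if_neg hj]
      · rw [dif_neg h,
          if_pos (show i' = (⟨m - 1, by omega⟩ : Fin m) from
            Fin.ext (by have := i'.isLt; simp; omega))]
        by_cases hj : (j : ℕ) = 0
        · rw [if_pos hj, if_pos hj]
          have h0 := ha s
          field_simp
        · rw [if_neg hj, if_neg hj]
    have h1 := hgradL s (Stmt13.Eij (⟨m - 1, by omega⟩ : Fin m) (⟨m - 1, by omega⟩ : Fin m))
    rw [Stmt13.trace_mul_Eij, harg, ← hkey, Stmt13.fderiv_deltaw] at h1
    rw [← h1]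
    rw [← Finset.add_sum_erase Finset.univ _ (Finset.mem_univ (0 : Fin m))]
    simp only [neg_mul, Finset.sum_neg_distrib]
    ring
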